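/- Fix r > 1/2 and define y(s,r) = 4r·(Γ((s+2r+1)/(4r))·Γ((s+4r−1)/(4r)))/(Γ((s+1)/(4r))·Γ((s+2r−1)/(4r))) for s > 0. Then the function f(s) = ∂²/∂s² (ln y)(s,r) is the unique function on (0, ∞) tending to 0 at +∞ that satisfies the functional equation f(s) + f(s+2r) = −1/(s+1)² − 1/(s+2r−1)² for all s > 0. -/

import Mathlib

open Filter Real

/-- Numerators of the convergents of a generalized continued fraction with
integer part `b₀`, partial numerators `a n` and partial denominators `b n` (for `n ≥ 1`). -/
noncomputable def cfNum (b₀ : ℝ) (a b : ℕ → ℝ) : ℕ → ℝ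
  | 0 => b₀
  | 1 => b 1 * b₀ + a 1
  | n + 2 => b (n + 2) * cfNum b₀ a b (n + 1) + a (n + 2) * cfNum b₀ a b n

/-- Denominators of the convergents of a generalized continued fraction. -/
noncomputable def cfDen (a b : ℕ → ℝ) : ℕ → ℝ
  | 0 => 1
  | 1 => b 1
  | n + 2 => b (n + 2) * cfDen a b (n + 1) + a (n + 2) * cfDen a b n

/-- `IsCFLimit b₀ a b L` means: the convergents of the generalized continued fraction
`b₀ + a 1 / (b 1 + a 2 / (b 2 + ⋯))` tend to `L`. -/
def IsCFLimit (b₀ : ℝ) (a b : ℕ → ℝ) (L : ℝ) : Prop :=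
  Filter.Tendsto (fun n => cfNum b₀ a b n / cfDen a b n) Filter.atTop (nhds L)

/-- The generalized Brouncker function `y(s, r)` expressed through the Gamma function. -/
noncomputable def yGen (r s : ℝ) : ℝ :=
  4 * r * (Real.Gamma ((s + 2*r + 1) / (4*r)) * Real.Gamma ((s + 4*r - 1) / (4*r))) /
    (Real.Gamma ((s + 1) / (4*r)) * Real.Gamma ((s + 2*r - 1) / (4*r)))

open Set


noncomputable def trig (x : ℝ) : ℝ := ∑' n : ℕ, 1 / (x + n) ^ 2

noncomputable def dig (x : ℝ) : ℝ :=
  -Real.eulerMascheroniConstant - 1 / x + ∑' n : ℕ, (1 / ((n : ℝ) + 1) - 1 / (x + ((n : ℝ) + 1)))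

lemma summable_aux : Summable (fun n : ℕ => 1 / ((n : ℝ) + 1) ^ 2) := by
  have := Real.summable_one_div_nat_pow.mpr (le_refl 2)
  rw [← summable_nat_add_iff 1] at this
  simpa using this

lemma trig_eq_shift {x : ℝ} (hx : 0 < x)
    (hsum : Summable (fun n : ℕ => 1 / (x + n) ^ 2)) :
    trig x = 1 / x ^ 2 + ∑' n : ℕ, 1 / (x + ((n : ℝ) + 1)) ^ 2 := by
  rw [trig, Summable.tsum_eq_zero_add hsum]
  congr 1
  · norm_num
  · apply tsum_congr
    intro n
    push_cast
    ring_nf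

lemma hasDerivAt_term (n : ℕ) {y : ℝ} (hy : 0 < y) :
    HasDerivAt (fun z : ℝ => 1 / ((n : ℝ) + 1) - 1 / (z + ((n : ℝ) + 1)))
      (1 / (y + ((n : ℝ) + 1)) ^ 2) y := by
  have hne : y + ((n : ℝ) + 1) ≠ 0 := by positivity
  have h1 : HasDerivAt (fun z : ℝ => z + ((n : ℝ) + 1)) 1 y :=
    (hasDerivAt_id y).add_const _
  have h2 := h1.inv hne
  have h3 := h2.const_sub (1 / ((n : ℝ) + 1))
  have : (1 : ℝ) / (y + ((n : ℝ) + 1)) ^ 2 = -(-1 / (y + ((n : ℝ) + 1)) ^ 2) := by ring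
  rw [this]
  convert h3 using 2 with z
  · rfl
  · rfl
  · simp [one_div]

lemma summable_trig {x : ℝ} (hx : 0 < x) : Summable (fun n : ℕ => 1 / (x + n) ^ 2) := by
  rw [← summable_nat_add_iff 1]
  refine summable_aux.of_nonneg_of_le (fun n => by positivity) (fun n => ?_)
  push_cast
  apply one_div_le_one_div_of_le (by positivity)
  have : (0:ℝ) ≤ (n:ℝ) := Nat.cast_nonneg n
  nlinarith

lemma trig_nonneg {x : ℝ} (hx : 0 < x) : 0 ≤ trig x :=
  tsum_nonneg (fun n => by positivity)

lemma trig_anti {x y : ℝ} (hx : 0 < x) (hxy : x ≤ y) : trig y ≤ trig x := by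
  apply Summable.tsum_le_tsum _ (summable_trig (hx.trans_le hxy)) (summable_trig hx)
  intro n
  apply one_div_le_one_div_of_le (by positivity)
  have : (0:ℝ) ≤ (n:ℝ) := Nat.cast_nonneg n
  nlinarith

lemma trig_shift {x : ℝ} (hx : 0 < x) : trig x = 1 / x ^ 2 + trig (x + 1) := by
  have h := summable_trig hx
  rw [trig, Summable.tsum_eq_zero_add h]
  congr 1
  · norm_num
  · rw [trig]
    apply tsum_congr
    intro n
    push_cast
    ring_nf

lemma hasDerivAt_dig {x : ℝ} (hx : 0 < x) : HasDerivAt dig (trig x) x := by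
  have hT : HasDerivAt
      (fun z : ℝ => ∑' n : ℕ, (1 / ((n : ℝ) + 1) - 1 / (z + ((n : ℝ) + 1))))
      (∑' n : ℕ, 1 / (x + ((n : ℝ) + 1)) ^ 2) x := by
    refine hasDerivAt_tsum_of_isPreconnected summable_aux isOpen_Ioi isPreconnected_Ioi
      (fun n y hy => hasDerivAt_term n hy) (fun n y hy => ?_) (mem_Ioi.mpr one_pos) ?_
      (mem_Ioi.mpr hx)
    · have hy0 : (0:ℝ) < y := hy
      rw [Real.norm_eq_abs, abs_of_pos (by positivity)]
      apply one_div_le_one_div_of_le (by positivity)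
      have : (0:ℝ) ≤ (n:ℝ) := Nat.cast_nonneg n
      nlinarith
    · refine summable_aux.of_nonneg_of_le (fun n => ?_) (fun n => ?_)
      · have : (1:ℝ) / (1 + ((n:ℝ)+1)) ≤ 1 / ((n:ℝ)+1) := by
          apply one_div_le_one_div_of_le (by positivity)
          linarith
        linarith
      · have h1 : 1/((n:ℝ)+1) - 1/(1+((n:ℝ)+1)) = 1/((((n:ℝ)+1))*(((n:ℝ)+2))) := by
          rw [div_sub_div _ _ (by positivity : ((n:ℝ)+1) ≠ 0)
            (by positivity : (1+((n:ℝ)+1)) ≠ 0)]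
          rw [div_eq_div_iff (by positivity) (by positivity)]
          ring
        rw [h1]
        apply one_div_le_one_div_of_le (by positivity)
        have : (0:ℝ) ≤ (n:ℝ) := Nat.cast_nonneg n
        nlinarith
  have hL : HasDerivAt (fun z : ℝ => -Real.eulerMascheroniConstant - 1 / z) (1 / x ^ 2) x := by
    have h := (hasDerivAt_inv hx.ne').const_sub (-Real.eulerMascheroniConstant)
    have e : (1:ℝ) / x ^ 2 = -(-(x ^ 2)⁻¹) := by ring
    rw [e]
    convert h using 2 with z
    · rfl
    · rfl
    · rw [one_div]
  have := hL.add hT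
  rw [← trig_eq_shift hx (summable_trig hx)] at this
  exact this

noncomputable def Spart (n : ℕ) (x : ℝ) : ℝ :=
  ∑ m ∈ Finset.range n, (1 / ((m : ℝ) + 1) - 1 / (x + ((m : ℝ) + 1)))

lemma harmonic_cast (n : ℕ) : ((harmonic n : ℚ) : ℝ) = ∑ m ∈ Finset.range n, 1 / ((m : ℝ) + 1) := by
  rw [harmonic]
  push_cast
  simp [one_div]

lemma lgs_hasDerivAt (n : ℕ) {x : ℝ} (hx : 0 < x) :
    HasDerivAt (fun y : ℝ => Real.BohrMollerup.logGammaSeq y n)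
      ((Real.log n - ((harmonic n : ℚ) : ℝ)) - 1 / x + Spart n x) x := by
  have h1 : HasDerivAt (fun y : ℝ => y * Real.log n + Real.log (Nat.factorial n)) (Real.log n) x :=
    (hasDerivAt_mul_const _).add_const _
  have h2 : HasDerivAt (fun y : ℝ => ∑ m ∈ Finset.range (n + 1), Real.log (y + m))
      (∑ m ∈ Finset.range (n + 1), 1 / (x + m)) x := by
    apply HasDerivAt.fun_sum
    intro m _
    have hne : x + (m : ℝ) ≠ 0 := by positivity
    have := (((hasDerivAt_id x).add_const (m : ℝ)).log hne)
    simpa [one_div] using this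
  have h3 := h1.sub h2
  have hval : Real.log n - ∑ m ∈ Finset.range (n + 1), 1 / (x + m) =
      (Real.log n - ((harmonic n : ℚ) : ℝ)) - 1 / x + Spart n x := by
    rw [Finset.sum_range_succ']
    rw [Spart, Finset.sum_sub_distrib, ← harmonic_cast]
    push_cast
    ring
  rw [hval] at h3
  exact h3

lemma tendstoUniformlyOn_const_seq {c : ℕ → ℝ} {a : ℝ} (h : Filter.Tendsto c atTop (nhds a))
    (K : Set ℝ) : TendstoUniformlyOn (fun n _ => c n) (fun _ => a) atTop K := by
  rw [Metric.tendstoUniformlyOn_iff]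
  intro ε hε
  filter_upwards [Metric.tendsto_nhds.mp h ε hε] with n hn x _
  rwa [dist_comm]

lemma tendstoUniformlyOn_self (F : ℝ → ℝ) (K : Set ℝ) :
    TendstoUniformlyOn (fun (_ : ℕ) x => F x) F atTop K := by
  rw [Metric.tendstoUniformlyOn_iff]
  intro ε hε
  filter_upwards with n x _
  simpa [dist_self] using hε

lemma hasDerivAt_log_Gamma {x : ℝ} (hx : 0 < x) :
    HasDerivAt (fun t : ℝ => Real.log (Real.Gamma t)) (dig x) x := by
  refine hasDerivAt_of_tendstoLocallyUniformlyOn (l := atTop) isOpen_Ioi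
    (f := fun (n : ℕ) (y : ℝ) => Real.BohrMollerup.logGammaSeq y n)
    (f' := fun (n : ℕ) (y : ℝ) => (Real.log n - ((harmonic n : ℚ) : ℝ)) - 1 / y + Spart n y)
    ?_ ?_ ?_ (mem_Ioi.mpr hx)
  · rw [tendstoLocallyUniformlyOn_iff_forall_isCompact isOpen_Ioi]
    intro K hK hKc
    rcases K.eq_empty_or_nonempty with rfl | hne
    · exact tendstoUniformlyOn_empty
    obtain ⟨b, hb⟩ := hKc.bddAbove
    have h1 : TendstoUniformlyOn (fun (n : ℕ) (_ : ℝ) => Real.log n - ((harmonic n : ℚ) : ℝ))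
        (fun _ => -Real.eulerMascheroniConstant) atTop K := by
      apply tendstoUniformlyOn_const_seq
      have := Real.tendsto_harmonic_sub_log.neg
      rw [show -Real.eulerMascheroniConstant = -Real.eulerMascheroniConstant from rfl]
      refine this.congr (fun n => ?_)
      push_cast
      ring
    have h2 : TendstoUniformlyOn (fun (_ : ℕ) (y : ℝ) => 1 / y) (fun y => 1 / y) atTop K :=
      tendstoUniformlyOn_self _ _
    have h3 : TendstoUniformlyOn (fun (n : ℕ) (y : ℝ) => Spart n y)
        (fun y => ∑' m : ℕ, (1 / ((m : ℝ) + 1) - 1 / (y + ((m : ℝ) + 1)))) atTop K := by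
      apply tendstoUniformlyOn_tsum_nat (u := fun m : ℕ => b * (1 / ((m : ℝ) + 1) ^ 2))
        (summable_aux.mul_left b)
      intro m y hy
      have hy0 : 0 < y := hK hy
      have hyb : y ≤ b := hb hy
      have hsub : (1 : ℝ) / (y + ((m : ℝ) + 1)) ≤ 1 / ((m : ℝ) + 1) := by
        apply one_div_le_one_div_of_le (by positivity)
        linarith
      rw [Real.norm_eq_abs, abs_of_nonneg (by linarith)]
      have hdiff : 1 / ((m : ℝ) + 1) - 1 / (y + ((m : ℝ) + 1)) =
          y / (((m : ℝ) + 1) * (y + ((m : ℝ) + 1))) := by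
        rw [div_sub_div _ _ (by positivity : ((m : ℝ) + 1) ≠ 0)
          (by positivity : (y + ((m : ℝ) + 1)) ≠ 0)]
        rw [div_eq_div_iff (by positivity) (by positivity)]
        ring
      rw [hdiff]
      have hb0 : 0 < b := lt_of_lt_of_le hy0 hyb
      rw [mul_one_div]
      apply div_le_div₀ hb0.le hyb (by positivity)
      have : (0 : ℝ) ≤ (m : ℝ) := Nat.cast_nonneg m
      nlinarith
    exact (h1.sub h2).add h3
  · filter_upwards with n
    intro y hy
    exact lgs_hasDerivAt n (mem_Ioi.mp hy)
  · intro y hy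
    exact Real.BohrMollerup.tendsto_log_gamma (mem_Ioi.mp hy)


noncomputable def phiF (r t : ℝ) : ℝ :=
  Real.log (4*r) + Real.log (Real.Gamma ((t + 2*r + 1) / (4*r)))
    + Real.log (Real.Gamma ((t + 4*r - 1) / (4*r)))
    - Real.log (Real.Gamma ((t + 1) / (4*r)))
    - Real.log (Real.Gamma ((t + 2*r - 1) / (4*r)))

noncomputable def dFr (r t : ℝ) : ℝ :=
  (dig ((t + 2*r + 1) / (4*r)) + dig ((t + 4*r - 1) / (4*r))
    - dig ((t + 1) / (4*r)) - dig ((t + 2*r - 1) / (4*r))) * (1 / (4*r))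

noncomputable def Fr (r s : ℝ) : ℝ :=
  ((trig ((s + 2*r + 1) / (4*r)) + trig ((s + 4*r - 1) / (4*r))
    - trig ((s + 1) / (4*r)) - trig ((s + 2*r - 1) / (4*r))) * (1 / (4*r))) * (1 / (4*r))

section
variable {r : ℝ} (hr : 1 / 2 < r)
include hr

lemma argA_pos {t : ℝ} (ht : 0 < t) : 0 < (t + 2*r + 1) / (4*r) := by
  apply div_pos <;> linarith

lemma argB_pos {t : ℝ} (ht : 0 < t) : 0 < (t + 4*r - 1) / (4*r) := by
  apply div_pos <;> linarith

lemma argC_pos {t : ℝ} (ht : 0 < t) : 0 < (t + 1) / (4*r) := by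
  apply div_pos <;> linarith

lemma argD_pos {t : ℝ} (ht : 0 < t) : 0 < (t + 2*r - 1) / (4*r) := by
  apply div_pos <;> linarith

lemma log_yGen_eq {t : ℝ} (ht : 0 < t) : Real.log (yGen r t) = phiF r t := by
  have gA := Real.Gamma_pos_of_pos (argA_pos hr ht)
  have gB := Real.Gamma_pos_of_pos (argB_pos hr ht)
  have gC := Real.Gamma_pos_of_pos (argC_pos hr ht)
  have gD := Real.Gamma_pos_of_pos (argD_pos hr ht)
  have h4 : (0:ℝ) < 4*r := by linarith
  rw [yGen, phiF, Real.log_div (by positivity) (by positivity),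
    Real.log_mul h4.ne' (by positivity), Real.log_mul gA.ne' gB.ne',
    Real.log_mul gC.ne' gD.ne']
  ring

lemma hasDerivAt_phiF {t : ℝ} (ht : 0 < t) : HasDerivAt (phiF r) (dFr r t) t := by
  have h0A : HasDerivAt (fun z : ℝ => (z + 2*r + 1) / (4*r)) (1/(4*r)) t :=
    (((hasDerivAt_id t).add_const (2*r+1)).div_const (4*r)).congr_of_eventuallyEq
      (Filter.Eventually.of_forall fun z => by simp only [id_eq]; try ring_nf)
  have h0B : HasDerivAt (fun z : ℝ => (z + 4*r - 1) / (4*r)) (1/(4*r)) t :=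
    (((hasDerivAt_id t).add_const (4*r-1)).div_const (4*r)).congr_of_eventuallyEq
      (Filter.Eventually.of_forall fun z => by simp only [id_eq]; try ring_nf)
  have h0C : HasDerivAt (fun z : ℝ => (z + 1) / (4*r)) (1/(4*r)) t :=
    (((hasDerivAt_id t).add_const (1:ℝ)).div_const (4*r)).congr_of_eventuallyEq
      (Filter.Eventually.of_forall fun z => by simp only [id_eq]; try ring_nf)
  have h0D : HasDerivAt (fun z : ℝ => (z + 2*r - 1) / (4*r)) (1/(4*r)) t :=
    (((hasDerivAt_id t).add_const (2*r-1)).div_const (4*r)).congr_of_eventuallyEq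
      (Filter.Eventually.of_forall fun z => by simp only [id_eq]; try ring_nf)
  have hA := (hasDerivAt_log_Gamma (argA_pos hr ht)).comp t h0A
  have hB := (hasDerivAt_log_Gamma (argB_pos hr ht)).comp t h0B
  have hC := (hasDerivAt_log_Gamma (argC_pos hr ht)).comp t h0C
  have hD := (hasDerivAt_log_Gamma (argD_pos hr ht)).comp t h0D
  have h := ((((hasDerivAt_const t (Real.log (4*r))).add hA).add hB).sub hC).sub hD
  rw [show dFr r t = 0 + dig ((t + 2*r + 1) / (4*r)) * (1/(4*r))
      + dig ((t + 4*r - 1) / (4*r)) * (1/(4*r)) - dig ((t + 1) / (4*r)) * (1/(4*r))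
      - dig ((t + 2*r - 1) / (4*r)) * (1/(4*r)) by rw [dFr]; ring]
  exact h.congr_of_eventuallyEq (Filter.Eventually.of_forall fun z => rfl)

lemma hasDerivAt_dFr {s : ℝ} (hs : 0 < s) : HasDerivAt (dFr r) (Fr r s) s := by
  have h0A : HasDerivAt (fun z : ℝ => (z + 2*r + 1) / (4*r)) (1/(4*r)) s :=
    (((hasDerivAt_id s).add_const (2*r+1)).div_const (4*r)).congr_of_eventuallyEq
      (Filter.Eventually.of_forall fun z => by simp only [id_eq]; try ring_nf)
  have h0B : HasDerivAt (fun z : ℝ => (z + 4*r - 1) / (4*r)) (1/(4*r)) s :=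
    (((hasDerivAt_id s).add_const (4*r-1)).div_const (4*r)).congr_of_eventuallyEq
      (Filter.Eventually.of_forall fun z => by simp only [id_eq]; try ring_nf)
  have h0C : HasDerivAt (fun z : ℝ => (z + 1) / (4*r)) (1/(4*r)) s :=
    (((hasDerivAt_id s).add_const (1:ℝ)).div_const (4*r)).congr_of_eventuallyEq
      (Filter.Eventually.of_forall fun z => by simp only [id_eq]; try ring_nf)
  have h0D : HasDerivAt (fun z : ℝ => (z + 2*r - 1) / (4*r)) (1/(4*r)) s :=
    (((hasDerivAt_id s).add_const (2*r-1)).div_const (4*r)).congr_of_eventuallyEq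
      (Filter.Eventually.of_forall fun z => by simp only [id_eq]; try ring_nf)
  have hA := (hasDerivAt_dig (argA_pos hr hs)).comp s h0A
  have hB := (hasDerivAt_dig (argB_pos hr hs)).comp s h0B
  have hC := (hasDerivAt_dig (argC_pos hr hs)).comp s h0C
  have hD := (hasDerivAt_dig (argD_pos hr hs)).comp s h0D
  have h := (((hA.add hB).sub hC).sub hD).mul_const (1/(4*r))
  rw [show Fr r s = (trig ((s + 2*r + 1) / (4*r)) * (1/(4*r)) + trig ((s + 4*r - 1) / (4*r)) * (1/(4*r))
      - trig ((s + 1) / (4*r)) * (1/(4*r)) - trig ((s + 2*r - 1) / (4*r)) * (1/(4*r))) * (1/(4*r))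
      by rw [Fr]; ring]
  exact h.congr_of_eventuallyEq (Filter.Eventually.of_forall fun z => rfl)

lemma second_deriv_eq {s : ℝ} (hs : 0 < s) :
    deriv (deriv (fun t : ℝ => Real.log (yGen r t))) s = Fr r s := by
  have hmem : Ioi (0:ℝ) ∈ nhds s := Ioi_mem_nhds hs
  have hev : (fun t : ℝ => Real.log (yGen r t)) =ᶠ[nhds s] phiF r :=
    Filter.eventually_of_mem hmem (fun t ht => log_yGen_eq hr (mem_Ioi.mp ht))
  have h1 : deriv (fun t : ℝ => Real.log (yGen r t)) =ᶠ[nhds s] dFr r := by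
    refine hev.deriv.trans ?_
    exact Filter.eventually_of_mem hmem (fun t ht => (hasDerivAt_phiF hr (mem_Ioi.mp ht)).deriv)
  rw [h1.deriv_eq, (hasDerivAt_dFr hr hs).deriv]

lemma Fr_FE {s : ℝ} (hs : 0 < s) :
    Fr r s + Fr r (s + 2*r) = -(1 / (s + 1) ^ 2) - 1 / (s + 2*r - 1) ^ 2 := by
  have h4 : (0:ℝ) < 4*r := by linarith
  have hC : 0 < (s+1)/(4*r) := argC_pos hr hs
  have hD : 0 < (s+2*r-1)/(4*r) := argD_pos hr hs
  have e1 : (s+2*r+2*r+1)/(4*r) = (s+1)/(4*r) + 1 := by field_simp; ring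
  have e2 : (s+2*r+4*r-1)/(4*r) = (s+2*r-1)/(4*r) + 1 := by field_simp; ring
  have e4 : (s+2*r+2*r-1)/(4*r) = (s+4*r-1)/(4*r) := by ring_nf
  have sh1 := trig_shift hC
  have sh2 := trig_shift hD
  simp only [Fr]
  rw [e1, e2, e4, sh1, sh2]
  have hs1 : s + 1 ≠ 0 := by linarith
  have hs2 : s + 2*r - 1 ≠ 0 := by nlinarith
  field_simp
  ring

lemma Fr_bounds {s : ℝ} (hs : 0 < s) :
    -(1 / (s + 1) ^ 2) - 1 / (s + 2*r - 1) ^ 2 ≤ Fr r s ∧ Fr r s ≤ 0 := by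
  have h4 : (0:ℝ) < 4*r := by linarith
  have h14 : (0:ℝ) < 1/(4*r) := by positivity
  have hC : 0 < (s+1)/(4*r) := argC_pos hr hs
  have hD : 0 < (s+2*r-1)/(4*r) := argD_pos hr hs
  have hAC : (s+1)/(4*r) ≤ (s+2*r+1)/(4*r) := (div_le_div_iff_of_pos_right h4).mpr (by linarith)
  have hA1 : (s+2*r+1)/(4*r) ≤ (s+1)/(4*r) + 1 := by
    rw [div_add' _ _ _ h4.ne']
    exact (div_le_div_iff_of_pos_right h4).mpr (by linarith)
  have hBD : (s+2*r-1)/(4*r) ≤ (s+4*r-1)/(4*r) := (div_le_div_iff_of_pos_right h4).mpr (by linarith)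
  have hB1 : (s+4*r-1)/(4*r) ≤ (s+2*r-1)/(4*r) + 1 := by
    rw [div_add' _ _ _ h4.ne']
    exact (div_le_div_iff_of_pos_right h4).mpr (by linarith)
  have t1 : trig ((s+2*r+1)/(4*r)) ≤ trig ((s+1)/(4*r)) := trig_anti hC hAC
  have t2 : trig ((s+4*r-1)/(4*r)) ≤ trig ((s+2*r-1)/(4*r)) := trig_anti hD hBD
  have t3 : trig ((s+1)/(4*r) + 1) ≤ trig ((s+2*r+1)/(4*r)) :=
    trig_anti (lt_of_lt_of_le hC hAC) hA1
  have t4 : trig ((s+2*r-1)/(4*r) + 1) ≤ trig ((s+4*r-1)/(4*r)) :=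
    trig_anti (lt_of_lt_of_le hD hBD) hB1
  have sh1 := trig_shift hC
  have sh2 := trig_shift hD
  have hX2 : trig ((s+2*r+1)/(4*r)) + trig ((s+4*r-1)/(4*r)) - trig ((s+1)/(4*r))
      - trig ((s+2*r-1)/(4*r)) ≤ 0 := by linarith
  have hX1 : -(1/((s+1)/(4*r))^2) - 1/((s+2*r-1)/(4*r))^2 ≤
      trig ((s+2*r+1)/(4*r)) + trig ((s+4*r-1)/(4*r)) - trig ((s+1)/(4*r))
      - trig ((s+2*r-1)/(4*r)) := by linarith
  have hs1 : s + 1 ≠ 0 := by linarith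
  have hs2 : s + 2*r - 1 ≠ 0 := by nlinarith
  have key : (-(1/((s+1)/(4*r))^2) - 1/((s+2*r-1)/(4*r))^2) * ((1/(4*r)) * (1/(4*r)))
      = -(1 / (s + 1) ^ 2) - 1 / (s + 2*r - 1) ^ 2 := by
    field_simp
  constructor
  · rw [Fr, ← key]
    nlinarith [mul_le_mul_of_nonneg_right hX1 (mul_pos h14 h14).le]
  · rw [Fr]
    nlinarith [mul_le_mul_of_nonneg_right hX2 (mul_pos h14 h14).le]

end

lemma uniqueness_aux {r : ℝ} (hr : 1/2 < r) {g : ℝ → ℝ}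
    (hfe : ∀ t : ℝ, 0 < t → g t + g (t + 2*r) = 0)
    (h0 : Filter.Tendsto g atTop (nhds 0)) {s : ℝ} (hs : 0 < s) : g s = 0 := by
  have hr0 : (0:ℝ) < r := by linarith
  have hstep : ∀ t : ℝ, 0 < t → g (t + 4*r) = g t := by
    intro t ht
    have h1 := hfe t ht
    have h2 := hfe (t + 2*r) (by linarith)
    rw [show t + 2*r + 2*r = t + 4*r by ring] at h2
    linarith
  have hconst : ∀ n : ℕ, g (s + 4*r*(n:ℝ)) = g s := by
    intro n
    induction n with
    | zero => norm_num
    | succ n ih =>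
      have hn : (0:ℝ) ≤ (n:ℝ) := Nat.cast_nonneg n
      have hpos : 0 < s + 4*r*(n:ℝ) := by nlinarith
      rw [show s + 4*r*((n+1 : ℕ):ℝ) = (s + 4*r*(n:ℝ)) + 4*r by push_cast; ring]
      rw [hstep _ hpos, ih]
  have htend : Filter.Tendsto (fun n : ℕ => s + 4*r*(n:ℝ)) atTop atTop := by
    apply tendsto_atTop_add_const_left
    exact Filter.Tendsto.const_mul_atTop (by linarith) tendsto_natCast_atTop_atTop
  have hlim2 : Filter.Tendsto (fun n : ℕ => g (s + 4*r*(n:ℝ))) atTop (nhds 0) := h0.comp htend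
  have heq : (fun n : ℕ => g (s + 4*r*(n:ℝ))) = fun _ => g s := funext hconst
  rw [heq] at hlim2
  exact tendsto_nhds_unique tendsto_const_nhds hlim2


theorem second_log_deriv_functional_equation (r : ℝ) (hr : 1 / 2 < r) :
    (∀ s : ℝ, 0 < s →
        deriv (deriv (fun t : ℝ => Real.log (yGen r t))) s +
          deriv (deriv (fun t : ℝ => Real.log (yGen r t))) (s + 2 * r) =
        -(1 / (s + 1) ^ 2) - 1 / (s + 2 * r - 1) ^ 2) ∧
    Tendsto (fun s : ℝ => deriv (deriv (fun t : ℝ => Real.log (yGen r t))) s)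
      atTop (nhds 0) ∧
    ∀ f : ℝ → ℝ,
      (∀ s : ℝ, 0 < s → f s + f (s + 2 * r) = -(1 / (s + 1) ^ 2) - 1 / (s + 2 * r - 1) ^ 2) →
      Tendsto f atTop (nhds 0) →
      ∀ s : ℝ, 0 < s → f s = deriv (deriv (fun t : ℝ => Real.log (yGen r t))) s := by
  have hFE : ∀ s : ℝ, 0 < s →
      deriv (deriv (fun t : ℝ => Real.log (yGen r t))) s +
        deriv (deriv (fun t : ℝ => Real.log (yGen r t))) (s + 2 * r) =
      -(1 / (s + 1) ^ 2) - 1 / (s + 2 * r - 1) ^ 2 := by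
    intro s hs
    rw [second_deriv_eq hr hs, second_deriv_eq hr (by linarith : (0:ℝ) < s + 2*r)]
    exact Fr_FE hr hs
  have h1 : Filter.Tendsto (fun s : ℝ => (s+1)^2) atTop atTop := by
    have h := tendsto_atTop_add_const_right atTop (1:ℝ) tendsto_id
    refine (h.atTop_mul_atTop₀ h).congr (fun s => ?_)
    simp only [id_eq]
    ring
  have h2 : Filter.Tendsto (fun s : ℝ => (s+2*r-1)^2) atTop atTop := by
    have h := tendsto_atTop_add_const_right atTop (2*r-1:ℝ) tendsto_id
    refine (h.atTop_mul_atTop₀ h).congr (fun s => ?_)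
    simp only [id_eq]
    ring
  have t1 : Filter.Tendsto (fun s : ℝ => 1/(s+1)^2) atTop (nhds 0) := by
    simpa [one_div, Pi.inv_def] using h1.inv_tendsto_atTop
  have t2 : Filter.Tendsto (fun s : ℝ => 1/(s+2*r-1)^2) atTop (nhds 0) := by
    simpa [one_div, Pi.inv_def] using h2.inv_tendsto_atTop
  have hlow : Filter.Tendsto (fun s : ℝ => -(1/(s+1)^2) - 1/(s+2*r-1)^2) atTop (nhds 0) := by
    simpa using t1.neg.sub t2
  have hlim : Filter.Tendsto (fun s : ℝ => deriv (deriv (fun t : ℝ => Real.log (yGen r t))) s)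
      atTop (nhds 0) := by
    apply tendsto_of_tendsto_of_tendsto_of_le_of_le' hlow tendsto_const_nhds
    · filter_upwards [eventually_gt_atTop (0:ℝ)] with s hs
      rw [second_deriv_eq hr hs]
      exact (Fr_bounds hr hs).1
    · filter_upwards [eventually_gt_atTop (0:ℝ)] with s hs
      rw [second_deriv_eq hr hs]
      exact (Fr_bounds hr hs).2
  refine ⟨hFE, hlim, ?_⟩
  intro f hf hf0 s hs
  have key := uniqueness_aux hr
    (g := fun t => f t - deriv (deriv (fun u : ℝ => Real.log (yGen r u))) t) ?_ ?_ hs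
  · simpa [sub_eq_zero] using key
  · intro t ht
    have ha := hf t ht
    have hb := hFE t ht
    linarith
  · simpa using hf0.sub hlim
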